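/- Invertibility: if all γ_j ≠ 0 and δ_j > 0, the MCLLO recalibration map on the open probability simplex is a bijection, with inverse given by the MCLLO map with parameters δ*_j = δ_j^{-1/γ_j} and γ*_j = 1/γ_j. -/

import Mathlib

open Real Finset

noncomputable def mcllo (n : ℕ) (δ γ : Fin n → ℝ) (x : Fin (n + 1) → ℝ) :
    Fin (n + 1) → ℝ := fun i =>
  if h : i = Fin.last n then
    1 / (1 + ∑ m, δ m * x m.castSucc ^ γ m * x (Fin.last n) ^ (-(γ m)))
  else
    δ (i.castPred h) * x i ^ γ (i.castPred h) * x (Fin.last n) ^ (-(γ (i.castPred h))) /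
      (1 + ∑ m, δ m * x m.castSucc ^ γ m * x (Fin.last n) ^ (-(γ m)))

lemma mcllo_last (n : ℕ) (δ γ : Fin n → ℝ) (x : Fin (n + 1) → ℝ) :
    mcllo n δ γ x (Fin.last n)
      = 1 / (1 + ∑ m, δ m * x m.castSucc ^ γ m * x (Fin.last n) ^ (-(γ m))) := by
  simp [mcllo]

lemma mcllo_castSucc (n : ℕ) (δ γ : Fin n → ℝ) (x : Fin (n + 1) → ℝ) (j : Fin n) :
    mcllo n δ γ x j.castSucc
      = δ j * x j.castSucc ^ γ j * x (Fin.last n) ^ (-(γ j)) /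
          (1 + ∑ m, δ m * x m.castSucc ^ γ m * x (Fin.last n) ^ (-(γ m))) := by
  have h : j.castSucc ≠ Fin.last n := (Fin.castSucc_lt_last j).ne
  simp [mcllo, h]

lemma S_pos (n : ℕ) (δ γ : Fin n → ℝ) (hδ : ∀ j, 0 < δ j)
    (x : Fin (n + 1) → ℝ) (hx : ∀ i, 0 < x i) :
    0 < 1 + ∑ m, δ m * x m.castSucc ^ γ m * x (Fin.last n) ^ (-(γ m)) := by
  have : 0 ≤ ∑ m, δ m * x m.castSucc ^ γ m * x (Fin.last n) ^ (-(γ m)) := by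
    apply Finset.sum_nonneg
    intro m _
    have := hδ m
    have h1 := Real.rpow_pos_of_pos (hx m.castSucc) (γ m)
    have h2 := Real.rpow_pos_of_pos (hx (Fin.last n)) (-(γ m))
    positivity
  linarith

lemma mcllo_mem (n : ℕ) (δ γ : Fin n → ℝ) (hδ : ∀ j, 0 < δ j)
    (x : Fin (n + 1) → ℝ) (hx : ∀ i, 0 < x i) :
    (∀ i, 0 < mcllo n δ γ x i) ∧ ∑ i, mcllo n δ γ x i = 1 := by
  have hS := S_pos n δ γ hδ x hx
  constructor
  · intro i
    rcases eq_or_ne i (Fin.last n) with h | h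
    · subst h
      rw [mcllo_last]
      positivity
    · obtain ⟨j, rfl⟩ := Fin.exists_castSucc_eq.mpr h
      rw [mcllo_castSucc]
      have := hδ j
      have h1 := Real.rpow_pos_of_pos (hx j.castSucc) (γ j)
      have h2 := Real.rpow_pos_of_pos (hx (Fin.last n)) (-(γ j))
      positivity
  · rw [Fin.sum_univ_castSucc]
    simp only [mcllo_castSucc, mcllo_last]
    rw [← Finset.sum_div, ← add_div, add_comm, div_self hS.ne']

lemma mcllo_inv (n : ℕ) (δ γ : Fin n → ℝ) (hδ : ∀ j, 0 < δ j) (hγ : ∀ j, γ j ≠ 0)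
    (x : Fin (n + 1) → ℝ) (hx : ∀ i, 0 < x i) (hsum : ∑ i, x i = 1) :
    mcllo n (fun j => δ j ^ (-(1 / γ j))) (fun j => 1 / γ j) (mcllo n δ γ x) = x := by
  have hS := S_pos n δ γ hδ x hx
  set g := mcllo n δ γ x with hg
  have hxc := hx (Fin.last n)
  have hgpos := (mcllo_mem n δ γ hδ x hx).1
  have key : ∀ j : Fin n,
      δ j ^ (-(1 / γ j)) * g j.castSucc ^ (1 / γ j) * g (Fin.last n) ^ (-(1 / γ j))
        = x j.castSucc / x (Fin.last n) := by
    intro j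
    have hgj := hgpos j.castSucc
    have hgc := hgpos (Fin.last n)
    have h1 : g j.castSucc ^ (1 / γ j) * g (Fin.last n) ^ (-(1 / γ j))
        = (g j.castSucc / g (Fin.last n)) ^ (1 / γ j) := by
      rw [Real.rpow_neg hgc.le, ← div_eq_mul_inv, ← Real.div_rpow hgj.le hgc.le]
    have hratio : g j.castSucc / g (Fin.last n)
        = δ j * x j.castSucc ^ γ j * x (Fin.last n) ^ (-(γ j)) := by
      rw [hg, mcllo_castSucc, mcllo_last]
      field_simp
    rw [mul_assoc, h1, hratio]
    have hxj := hx j.castSucc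
    have hp1 : (0:ℝ) ≤ x j.castSucc ^ γ j := (Real.rpow_pos_of_pos hxj _).le
    have hp2 : (0:ℝ) ≤ x (Fin.last n) ^ (-(γ j)) := (Real.rpow_pos_of_pos hxc _).le
    rw [Real.mul_rpow (mul_nonneg (hδ j).le hp1) hp2, Real.mul_rpow (hδ j).le hp1,
        ← Real.rpow_mul hxj.le, ← Real.rpow_mul hxc.le,
        mul_one_div_cancel (hγ j),
        show -(γ j) * (1 / γ j) = -1 by rw [neg_mul, mul_one_div_cancel (hγ j)],
        Real.rpow_one, Real.rpow_neg_one]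
    rw [show δ j ^ (-(1 / γ j)) * (δ j ^ (1 / γ j) * x j.castSucc * (x (Fin.last n))⁻¹)
          = δ j ^ (-(1 / γ j)) * δ j ^ (1 / γ j) * (x j.castSucc * (x (Fin.last n))⁻¹) by ring,
        ← Real.rpow_add (hδ j), neg_add_cancel, Real.rpow_zero, one_mul, ← div_eq_mul_inv]
  have hsum' : ∑ m : Fin n, x m.castSucc = 1 - x (Fin.last n) := by
    rw [Fin.sum_univ_castSucc] at hsum; linarith
  have hSstar : 1 + ∑ m, δ m ^ (-(1 / γ m)) * g m.castSucc ^ (1 / γ m)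
      * g (Fin.last n) ^ (-(1 / γ m)) = (x (Fin.last n))⁻¹ := by
    rw [Finset.sum_congr rfl fun m _ => key m, ← Finset.sum_div, hsum']
    field_simp
    ring
  funext i
  rcases eq_or_ne i (Fin.last n) with h | h
  · subst h
    rw [mcllo_last, hSstar, one_div, inv_inv]
  · obtain ⟨j, rfl⟩ := Fin.exists_castSucc_eq.mpr h
    rw [mcllo_castSucc, key j, hSstar, div_inv_eq_mul, div_mul_cancel₀ _ hxc.ne']

/-- For `δ_j > 0` and `γ_j ≠ 0`, the MCLLO map is a bijection of the
open probability simplex, with inverse the MCLLO map with parameters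
`δ*_j = δ_j ^ (-1/γ_j)` and `γ*_j = 1/γ_j`. -/
theorem mcllo_bijective_on_simplex (n : ℕ) (hn : 1 ≤ n)
    (δ γ : Fin n → ℝ) (hδ : ∀ j, 0 < δ j) (hγ : ∀ j, γ j ≠ 0) :
    (∀ x : Fin (n + 1) → ℝ, (∀ i, 0 < x i) → ∑ i, x i = 1 →
        ((∀ i, 0 < mcllo n δ γ x i) ∧ ∑ i, mcllo n δ γ x i = 1)) ∧
    (∀ x : Fin (n + 1) → ℝ, (∀ i, 0 < x i) → ∑ i, x i = 1 →
        mcllo n (fun j => δ j ^ (-(1 / γ j))) (fun j => 1 / γ j) (mcllo n δ γ x) = x) ∧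
    (∀ x : Fin (n + 1) → ℝ, (∀ i, 0 < x i) → ∑ i, x i = 1 →
        mcllo n δ γ (mcllo n (fun j => δ j ^ (-(1 / γ j))) (fun j => 1 / γ j) x) = x) := by
  refine ⟨fun x hx _ => mcllo_mem n δ γ hδ x hx,
    fun x hx hs => mcllo_inv n δ γ hδ hγ x hx hs, fun x hx hs => ?_⟩
  have hδ' : ∀ j, 0 < δ j ^ (-(1 / γ j)) := fun j => Real.rpow_pos_of_pos (hδ j) _
  have hγ' : ∀ j, (1 / γ j) ≠ 0 := fun j => one_div_ne_zero (hγ j)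
  have h := mcllo_inv n (fun j => δ j ^ (-(1 / γ j))) (fun j => 1 / γ j) hδ' hγ' x hx hs
  have e1 : (fun j => (δ j ^ (-(1 / γ j))) ^ (-(1 / (1 / γ j)))) = δ := by
    funext j
    rw [one_div_one_div, ← Real.rpow_mul (hδ j).le,
        show -(1 / γ j) * -(γ j) = 1 by rw [neg_mul_neg, one_div, inv_mul_cancel₀ (hγ j)],
        Real.rpow_one]
  have e2 : (fun j => 1 / (1 / γ j)) = γ := by
    funext j; rw [one_div_one_div]
  rw [e1, e2] at h
  exact h
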